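/- If f : 𝒳 → ℝ is differentiable on an open convex set 𝒳 ⊆ ℝⁿ with minimizer x*, and for all x ∈ 𝒳 and t ∈ [0,1] the inequality f(tx* + (1−t)x) + t(1 − t/(2−γ))·(γμ/2)·‖x* − x‖² ≤ γt·f(x*) + (1−γt)·f(x) holds, then for all x ∈ 𝒳: f(x*) ≥ f(x) + (1/γ)·⟨∇f(x), x* − x⟩ + (μ/2)·‖x* − x‖². -/

import Mathlib

open RealInnerProductSpace

theorem segment_bound_implies_strong_quasar {n : ℕ}
    (s : Set (EuclideanSpace ℝ (Fin n))) (hs : IsOpen s) (hconv : Convex ℝ s)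
    (f : EuclideanSpace ℝ (Fin n) → ℝ)
    (hdiff : ∀ x ∈ s, DifferentiableAt ℝ f x)
    (xstar : EuclideanSpace ℝ (Fin n)) (hxs : xstar ∈ s)
    (hmin : ∀ x ∈ s, f xstar ≤ f x)
    (γ μ : ℝ) (hγ : γ ∈ Set.Ioc (0:ℝ) 1) (hμ : 0 ≤ μ)
    (hseg : ∀ x ∈ s, ∀ t ∈ Set.Icc (0:ℝ) 1,
      f (t • xstar + (1 - t) • x) + t * (1 - t / (2 - γ)) * (γ * μ / 2) * ‖xstar - x‖^2 ≤
        γ * t * f xstar + (1 - γ * t) * f x) :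
    ∀ x ∈ s, f xstar ≥ f x + (1/γ) * ⟪gradient f x, xstar - x⟫ + (μ/2) * ‖xstar - x‖^2 := by
  intro x hx
  obtain ⟨hγ0, hγ1⟩ := hγ
  set v := xstar - x with hv
  set d := ⟪gradient f x, v⟫ with hd
  -- derivative of g t = f (x + t • v) at 0 is d
  have hline : HasDerivAt (fun t : ℝ => x + t • v) v 0 := by
    simpa using ((hasDerivAt_id (0:ℝ)).smul_const v).const_add x
  have hfd : HasFDerivAt f ((InnerProductSpace.toDual ℝ _) (gradient f x)) x :=
    ((hdiff x hx).hasGradientAt).hasFDerivAt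
  have hg : HasDerivAt (fun t : ℝ => f (x + t • v)) d 0 := by
    have := (by simpa using hfd :
        HasFDerivAt f ((InnerProductSpace.toDual ℝ _) (gradient f x)) ((fun t : ℝ => x + t • v) 0)).comp_hasDerivAt 0 hline
    simpa [Function.comp_def, hd, InnerProductSpace.toDual_apply_apply] using this
  set g : ℝ → ℝ := fun t => f (x + t • v) with hgdef
  have hslope : Filter.Tendsto (slope g 0) (nhdsWithin 0 (Set.Ioi 0)) (nhds d) :=
    (hasDerivAt_iff_tendsto_slope.1 hg).mono_left
      (nhdsWithin_mono _ (fun t ht => by simp [Set.mem_Ioi] at ht ⊢; exact ne_of_gt ht))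
  set c : ℝ → ℝ := fun t => γ * (f xstar - f x) - (1 - t / (2 - γ)) * (γ * μ / 2) * ‖v‖^2 with hcdef
  have hc : Filter.Tendsto c (nhdsWithin 0 (Set.Ioi 0)) (nhds (c 0)) := by
    apply Filter.Tendsto.mono_left _ nhdsWithin_le_nhds
    apply Continuous.tendsto
    fun_prop
  have hev : ∀ᶠ t in nhdsWithin (0:ℝ) (Set.Ioi 0), slope g 0 t ≤ c t := by
    filter_upwards [Ioc_mem_nhdsGT_of_mem (Set.mem_Ico.2 ⟨le_refl (0:ℝ), one_pos⟩)] with t ht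
    obtain ⟨ht0, ht1⟩ := ht
    have hs := hseg x hx t ⟨le_of_lt ht0, ht1⟩
    have harg : t • xstar + (1 - t) • x = x + t • v := by
      simp [hv, smul_sub, sub_smul]; abel
    rw [harg] at hs
    have hg0 : g 0 = f x := by simp [hgdef]
    rw [← hv] at hs
    rw [slope_def_field, hg0, sub_zero, div_le_iff₀ ht0]
    have hgt : g t = f (x + t • v) := rfl
    have hct : c t = γ * (f xstar - f x) - (1 - t / (2 - γ)) * (γ * μ / 2) * ‖v‖^2 := rfl
    rw [hgt, hct]
    nlinarith [hs]
  have hdle : d ≤ c 0 := le_of_tendsto_of_tendsto hslope hc hev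
  have hc0 : c 0 = γ * (f xstar - f x) - γ * μ / 2 * ‖v‖^2 := by
    have : c 0 = γ * (f xstar - f x) - (1 - 0 / (2 - γ)) * (γ * μ / 2) * ‖v‖^2 := rfl
    rw [this]; ring
  rw [hc0] at hdle
  rw [ge_iff_le]
  have h2 : (1/γ) * d ≤ (f xstar - f x) - μ / 2 * ‖v‖^2 := by
    rw [div_mul_eq_mul_div, one_mul, div_le_iff₀ hγ0] at *
    nlinarith
  linarith
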